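/- arXiv:2011.00810 — 3 statements merged into one kernel-verified Lean document; each statement's English description precedes it below -/
import Mathlib

section
/- Let π̂ : [n] → ℕ be a function (pre-tie-breaking position estimates) and π_0 the identity permutation, and suppose there is N ≥ 0 such that π̂(i) ∈ [i - N, i + N] for all i ∈ [n]. Let σ ∈ S_n be any permutation consistent with π̂, i.e., π̂(i) < π̂(j) implies σ(i) < σ(j) for all i, j. Then |σ(i) - i| ≤ 2N for all i ∈ [n]. -/
/-- tie-breaking step: if the pre-tie-breaking position
estimates `π̂ : [n] → ℕ` satisfy `|π̂(i) - i| ≤ N` (with the central ranking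
being the identity), then any permutation `σ` consistent with `π̂` (i.e.
`π̂(i) < π̂(j) → σ(i) < σ(j)`) satisfies `|σ(i) - i| ≤ 2N` for all `i`. -/
theorem tie_breaking_doubles_error {n : ℕ} (πhat : Fin n → ℕ) (N : ℕ)
    (happrox : ∀ i : Fin n, πhat i ≤ (i : ℕ) + N ∧ (i : ℕ) ≤ πhat i + N)
    (σ : Equiv.Perm (Fin n))
    (hcons : ∀ i j : Fin n, πhat i < πhat j → σ i < σ j) :
    ∀ i : Fin n, ((σ i : ℕ) ≤ (i : ℕ) + 2 * N) ∧ ((i : ℕ) ≤ (σ i : ℕ) + 2 * N) := by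
  intro i
  -- key monotone facts
  have hkey1 : ∀ j : Fin n, σ j ≤ σ i → (j : ℕ) ≤ (i : ℕ) + 2 * N := by
    intro j hji
    have hπ : πhat j ≤ πhat i := by
      by_contra h
      exact absurd (hcons i j (lt_of_not_ge h)) (not_lt.mpr hji)
    have h1 := (happrox j).2
    have h2 := (happrox i).1
    omega
  have hkey2 : ∀ j : Fin n, σ i ≤ σ j → (i : ℕ) ≤ (j : ℕ) + 2 * N := by
    intro j hij
    have hπ : πhat i ≤ πhat j := by
      by_contra h
      exact absurd (hcons j i (lt_of_not_ge h)) (not_lt.mpr hij)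
    have h1 := (happrox i).2
    have h2 := (happrox j).1
    omega
  constructor
  · -- count {j | σ j ≤ σ i}
    set A := Finset.univ.filter (fun j => σ j ≤ σ i) with hA
    have hAcard : A.card = (σ i : ℕ) + 1 := by
      have : A = (Finset.Iic (σ i)).map σ.symm.toEmbedding := by
        ext j
        simp [hA, Finset.mem_map, Equiv.symm_apply_eq]
      rw [this, Finset.card_map, Fin.card_Iic]
    have hAle : A.card ≤ (i : ℕ) + 2 * N + 1 := by
      have hinj : ∀ j ∈ A, (j : ℕ) ∈ Finset.range ((i : ℕ) + 2 * N + 1) := by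
        intro j hj
        simp only [hA, Finset.mem_filter] at hj
        simp [Nat.lt_succ_iff]
        exact hkey1 j hj.2
      calc A.card ≤ (Finset.range ((i : ℕ) + 2 * N + 1)).card :=
            Finset.card_le_card_of_injOn (fun j => (j : ℕ)) hinj
              (fun a _ b _ h => Fin.ext h)
        _ = (i : ℕ) + 2 * N + 1 := Finset.card_range _
    omega
  · -- count {j | σ i ≤ σ j} and {j | j + 2N < i}
    set A := Finset.univ.filter (fun j => σ i ≤ σ j) with hA
    set C := Finset.univ.filter (fun j : Fin n => (j : ℕ) + 2 * N < (i : ℕ)) with hC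
    have hAcard : A.card = n - (σ i : ℕ) := by
      have : A = (Finset.Ici (σ i)).map σ.symm.toEmbedding := by
        ext j
        simp [hA, Finset.mem_map, Equiv.symm_apply_eq]
      rw [this, Finset.card_map, Fin.card_Ici]
    have hCcard : (i : ℕ) - 2 * N ≤ C.card := by
      have h2 : ∀ m ∈ Finset.range ((i : ℕ) - 2 * N), m < n := by
        intro m hm
        simp at hm
        have := i.isLt
        omega
      calc (i : ℕ) - 2 * N = (Finset.range ((i : ℕ) - 2 * N)).card :=
            (Finset.card_range _).symm
        _ ≤ C.card := by
            apply Finset.card_le_card_of_injOn (fun m => if h : m < n then (⟨m, h⟩ : Fin n) else i)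
            · intro m hm
              simp only [hC, Finset.mem_filter]
              rw [dif_pos (h2 m hm)]
              simp at hm ⊢
              omega
            · intro a ha b hb hab
              simp only [Finset.mem_coe, Finset.mem_range] at ha hb
              have han : a < n := by have := i.isLt; omega
              have hbn : b < n := by have := i.isLt; omega
              simp only [dif_pos han, dif_pos hbn] at hab
              exact congrArg Fin.val hab
    have hdisj : Disjoint A C := by
      rw [Finset.disjoint_left]
      intro j hjA hjC
      simp only [hA, Finset.mem_filter] at hjA
      simp only [hC, Finset.mem_filter] at hjC
      have := hkey2 j hjA.2
      omega
    have hcard : A.card + C.card ≤ n := by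
      calc A.card + C.card = (A ∪ C).card := (Finset.card_union_of_disjoint hdisj).symm
        _ ≤ (Finset.univ : Finset (Fin n)).card := Finset.card_le_card (Finset.subset_univ _)
        _ = n := Finset.card_univ.trans (Fintype.card_fin n)
    have hσlt := (σ i).isLt
    omega
end

section
/- Let F be a finite set of hypotheses (central rankings) and suppose an estimator A maps observations Π̂ ∈ Ω to elements of F (possibly randomly). Suppose there exists π ∈ F and c : F → ℝ≥0 with c(π) = 0 such that for all π' ∈ F and all Π̂ ∈ Ω: Pr[Π̂ | π] ≥ e^{-β c(π')} Pr[Π̂ | π']. If the estimator succeeds with probability at least 1-ε under every hypothesis, i.e., Σ_{Π̂} Pr[A(Π̂) = π'] Pr[Π̂ | π'] ≥ 1-ε for all π' ∈ F, then (1-ε) Σ_{π'∈F} e^{-β c(π')} ≤ 1. -/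
open Finset

/-- abstract information-theoretic estimation bound: if there
is a hypothesis `π` whose likelihood dominates every hypothesis `π'` up to a
factor `e^{-β c(π')}` (with `c(π) = 0`), and a (possibly randomized)
estimator succeeds with probability at least `1-ε` under every hypothesis,
then `(1-ε) Σ_{π'} e^{-β c(π')} ≤ 1`. -/
theorem estimation_lower_bound_core {F Ω : Type*} [Fintype F] [Fintype Ω]
    (β ε : ℝ)
    -- likelihoods of the hypotheses
    (Pr : F → Ω → ℝ) (hPr0 : ∀ π' o, 0 ≤ Pr π' o)
    (hPr1 : ∀ π' : F, ∑ o : Ω, Pr π' o = 1)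
    -- randomized estimator: A o π' is the probability of outputting π' on Π
    (A : Ω → F → ℝ) (hA0 : ∀ o π', 0 ≤ A o π')
    (hA1 : ∀ o : Ω, ∑ π' : F, A o π' ≤ 1)
    -- likelihood-ratio domination by the hypothesis π
    (π : F) (c : F → ℝ) (hc0 : ∀ π', 0 ≤ c π') (hcπ : c π = 0)
    (hratio : ∀ (π' : F) (o : Ω), Real.exp (-β * c π') * Pr π' o ≤ Pr π o)
    -- the estimator succeeds with probability at least 1-ε under every hypothesis
    (hsucc : ∀ π' : F, 1 - ε ≤ ∑ o : Ω, A o π' * Pr π' o) :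
    (1 - ε) * ∑ π' : F, Real.exp (-β * c π') ≤ 1 := by
  calc (1 - ε) * ∑ π' : F, Real.exp (-β * c π')
      = ∑ π' : F, (1 - ε) * Real.exp (-β * c π') := by rw [Finset.mul_sum]
    _ ≤ ∑ π' : F, (∑ o : Ω, A o π' * Pr π' o) * Real.exp (-β * c π') := by
        apply Finset.sum_le_sum
        intro π' _
        exact mul_le_mul_of_nonneg_right (hsucc π') (Real.exp_nonneg _)
    _ = ∑ o : Ω, ∑ π' : F, A o π' * (Real.exp (-β * c π') * Pr π' o) := by
        rw [Finset.sum_comm]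
        congr 1; ext π'
        rw [Finset.sum_mul]
        congr 1; ext o; ring
    _ ≤ ∑ o : Ω, ∑ π' : F, A o π' * Pr π o := by
        apply Finset.sum_le_sum; intro o _
        apply Finset.sum_le_sum; intro π' _
        exact mul_le_mul_of_nonneg_left (hratio π' o) (hA0 o π')
    _ = ∑ o : Ω, (∑ π' : F, A o π') * Pr π o := by
        congr 1; ext o; rw [Finset.sum_mul]
    _ ≤ ∑ o : Ω, 1 * Pr π o := by
        apply Finset.sum_le_sum; intro o _
        exact mul_le_mul_of_nonneg_right (hA1 o) (hPr0 π o)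
    _ = 1 := by simp [hPr1 π]
end

section
/- Combining the previous two facts: let n be even, ε ∈ (0, 1/2], β > 0, and suppose for the matching P = {(1,2),...,(n-1,n)} at least n/4 pairs (i,j) ∈ P have co-occurrence count m_{i,j} < (1/β)·ln(n(1-ε)/(4ε)). Then no estimator can recover every central ranking in F (the family of permutations respecting the pair partition) with probability at least 1-ε: we get the contradiction (1-ε)·(1 + (n/4)·(4ε/(n(1-ε)))) ≤ 1, i.e., 1 + ε ≤ 1, which is false since ε > 0. -/
open Finset

/-- The first element of the `i`-th consecutive pair of `[2k]` (0-indexed). -/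
def pairFst (k : ℕ) (i : Fin k) : Fin (2 * k) := ⟨2 * i.val, by omega⟩

/-- The second element of the `i`-th consecutive pair of `[2k]` (0-indexed). -/
def pairSnd (k : ℕ) (i : Fin k) : Fin (2 * k) := ⟨2 * i.val + 1, by omega⟩

/-- The family `F` of permutations of `[2k]` preserving each consecutive pair
`{2i-1, 2i}` setwise. -/
def pairPerms (k : ℕ) : Finset (Equiv.Perm (Fin (2 * k))) :=
  (Finset.univ : Finset (Equiv.Perm (Fin (2 * k)))).filter
    (fun π => ∀ i : Fin k,
      ({π (pairFst k i), π (pairSnd k i)} : Finset (Fin (2 * k)))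
        = {pairFst k i, pairSnd k i})

/-- The set of matching pairs on which `π` and `π'` disagree. -/
def disagreeSet (k : ℕ) (π π' : Equiv.Perm (Fin (2 * k))) : Finset (Fin k) :=
  (Finset.univ : Finset (Fin k)).filter (fun i =>
    ¬ ((π (pairFst k i) < π (pairSnd k i)) ↔ (π' (pairFst k i) < π' (pairSnd k i))))

section Aux
variable (k : ℕ)

lemma pf_ne_ps (i j : Fin k) : pairFst k i ≠ pairSnd k j := by
  simp only [pairFst, pairSnd, ne_eq, Fin.ext_iff]; omega

lemma pf_inj (i j : Fin k) (h : i ≠ j) : pairFst k i ≠ pairFst k j := by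
  simp only [pairFst, ne_eq, Fin.ext_iff] at *
  omega

lemma ps_inj (i j : Fin k) (h : i ≠ j) : pairSnd k i ≠ pairSnd k j := by
  simp only [pairSnd, ne_eq, Fin.ext_iff] at *
  omega

lemma pf_lt_ps (i : Fin k) : pairFst k i < pairSnd k i := by
  simp [pairFst, pairSnd, Fin.lt_def]

lemma one_mem_pairPerms : (1 : Equiv.Perm (Fin (2 * k))) ∈ pairPerms k := by
  simp [pairPerms]

def sw (i : Fin k) : Equiv.Perm (Fin (2 * k)) := Equiv.swap (pairFst k i) (pairSnd k i)

lemma sw_mem (i : Fin k) : sw k i ∈ pairPerms k := by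
  simp only [pairPerms, mem_filter, mem_univ, true_and]
  intro j
  by_cases h : j = i
  · subst h
    simp [sw, Equiv.swap_apply_left, Equiv.swap_apply_right, Finset.pair_comm]
  · rw [sw, Equiv.swap_apply_of_ne_of_ne (pf_inj k j i h) (pf_ne_ps k j i),
      Equiv.swap_apply_of_ne_of_ne (Ne.symm (pf_ne_ps k i j)) (ps_inj k j i h)]

lemma disagree_one_one : disagreeSet k 1 1 = ∅ := by
  ext j; simp [disagreeSet]

lemma disagree_one_sw (i : Fin k) : disagreeSet k 1 (sw k i) = {i} := by
  ext j
  simp only [disagreeSet, mem_filter, mem_univ, true_and, mem_singleton]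
  simp only [Equiv.Perm.coe_one, id_eq]
  by_cases h : j = i
  · subst h
    simp only [sw, Equiv.swap_apply_left, Equiv.swap_apply_right]
    have h1 := pf_lt_ps k j
    exact iff_of_true (fun hc => absurd (hc.mp h1) (not_lt.mpr h1.le)) trivial
  · simp only [h, iff_false]
    rw [sw, Equiv.swap_apply_of_ne_of_ne (pf_inj k j i h) (pf_ne_ps k j i),
      Equiv.swap_apply_of_ne_of_ne (Ne.symm (pf_ne_ps k i j)) (ps_inj k j i h)]
    tauto

lemma sw_injective : Function.Injective (sw k) := by
  intro i j h
  by_contra hij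
  have := Equiv.congr_fun h (pairFst k i)
  simp only [sw, Equiv.swap_apply_left] at this
  rw [Equiv.swap_apply_of_ne_of_ne (pf_inj k i j hij) (pf_ne_ps k i j)] at this
  exact pf_ne_ps k i i this.symm

lemma sw_ne_one (i : Fin k) : sw k i ≠ 1 := by
  intro h
  have := Equiv.congr_fun h (pairFst k i)
  simp only [sw, Equiv.swap_apply_left, Equiv.Perm.coe_one, id_eq] at this
  exact pf_ne_ps k i i this.symm

end Aux

/-- lower bound, Theorem 2 of the paper, combined step: with
`n = 2k` even, `ε ∈ (0,1/2]`, `β > 0`, if at least `n/4` of the matching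
pairs have co-occurrence count `m_{i,j} < (1/β)·ln(n(1-ε)/(4ε))`, then no
estimator can recover every central ranking in `F` with probability at least
`1-ε`. -/
theorem no_estimator_recovers_all {Ω : Type*} [Fintype Ω]
    (k : ℕ) (hk : 0 < k) (β ε : ℝ) (hβ : 0 < β) (hε0 : 0 < ε) (hε1 : ε ≤ 1 / 2)
    -- co-occurrence counts of the matching pairs
    (m : Fin k → ℝ) (hm : ∀ i, 0 ≤ m i)
    -- at least n/4 matching pairs are observed fewer than M times
    (hfew : ((2 * k : ℝ)) / 4 ≤
      (((Finset.univ : Finset (Fin k)).filter (fun i =>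
        m i < (1 / β) * Real.log ((2 * k : ℝ) * (1 - ε) / (4 * ε)))).card : ℝ))
    -- likelihoods of the candidate central rankings
    (Pr : Equiv.Perm (Fin (2 * k)) → Ω → ℝ)
    (hPr0 : ∀ π o, 0 ≤ Pr π o)
    (hPr1 : ∀ π ∈ pairPerms k, ∑ o : Ω, Pr π o = 1)
    -- likelihood-ratio inequality within F, with exponent the total
    -- co-occurrence count of the disagreeing pairs
    (hratio : ∀ π ∈ pairPerms k, ∀ π' ∈ pairPerms k, ∀ o : Ω,
      Real.exp (-β * ∑ i ∈ disagreeSet k π π', m i) * Pr π' o ≤ Pr π o)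
    -- randomized estimator: A o π is the probability of outputting π on o
    (A : Ω → Equiv.Perm (Fin (2 * k)) → ℝ) (hA0 : ∀ o π, 0 ≤ A o π)
    (hA1 : ∀ o : Ω, ∑ π : Equiv.Perm (Fin (2 * k)), A o π ≤ 1) :
    ¬ (∀ π ∈ pairPerms k, 1 - ε ≤ ∑ o : Ω, A o π * Pr π o) := by
  intro h
  have hε1' : ε < 1 := by linarith
  have hεpos : (0:ℝ) < 1 - ε := by linarith
  have hkpos : (0:ℝ) < (k : ℝ) := by exact_mod_cast hk
  set C : ℝ := (2 * k : ℝ) * (1 - ε) / (4 * ε) with hC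
  have hCpos : 0 < C := by
    apply div_pos (by positivity) (by positivity)
  set T := (Finset.univ : Finset (Fin k)).filter
      (fun i => m i < (1 / β) * Real.log C) with hT
  set f : Equiv.Perm (Fin (2 * k)) → ℝ :=
    fun π' => Real.exp (-β * ∑ i ∈ disagreeSet k 1 π', m i) with hf
  -- upper bound: (1-ε) * S ≤ 1
  have hmain : (1 - ε) * ∑ π' ∈ pairPerms k, f π' ≤ 1 := by
    have step1 : ∀ π' ∈ pairPerms k, (1 - ε) * f π' ≤ ∑ o : Ω, A o π' * Pr 1 o := by
      intro π' hπ'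
      calc (1 - ε) * f π' ≤ (∑ o : Ω, A o π' * Pr π' o) * f π' :=
            mul_le_mul_of_nonneg_right (h π' hπ') (Real.exp_nonneg _)
        _ = ∑ o : Ω, A o π' * (f π' * Pr π' o) := by
            rw [Finset.sum_mul]; exact Finset.sum_congr rfl (fun o _ => by ring)
        _ ≤ ∑ o : Ω, A o π' * Pr 1 o := by
            refine Finset.sum_le_sum (fun o _ => ?_)
            exact mul_le_mul_of_nonneg_left
              (hratio 1 (one_mem_pairPerms k) π' hπ' o) (hA0 o π')
    calc (1 - ε) * ∑ π' ∈ pairPerms k, f π'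
        = ∑ π' ∈ pairPerms k, (1 - ε) * f π' := Finset.mul_sum _ _ _
      _ ≤ ∑ π' ∈ pairPerms k, ∑ o : Ω, A o π' * Pr 1 o := Finset.sum_le_sum step1
      _ = ∑ o : Ω, (∑ π' ∈ pairPerms k, A o π') * Pr 1 o := by
          rw [Finset.sum_comm]
          exact Finset.sum_congr rfl (fun o _ => (Finset.sum_mul _ _ _).symm)
      _ ≤ ∑ o : Ω, 1 * Pr 1 o := by
          refine Finset.sum_le_sum (fun o _ => ?_)
          refine mul_le_mul_of_nonneg_right ?_ (hPr0 1 o)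
          calc ∑ π' ∈ pairPerms k, A o π' ≤ ∑ π' : Equiv.Perm (Fin (2 * k)), A o π' :=
                Finset.sum_le_sum_of_subset_of_nonneg (Finset.subset_univ _)
                  (fun π' _ _ => hA0 o π')
            _ ≤ 1 := hA1 o
      _ = 1 := by
          simp only [one_mul]
          exact hPr1 1 (one_mem_pairPerms k)
  -- lower bound: S > 1 + T.card * C⁻¹
  have hterm : ∀ i ∈ T, C⁻¹ < Real.exp (-β * m i) := by
    intro i hi
    rw [hT, mem_filter] at hi
    have h2 : β * m i < Real.log C := by
      have := hi.2
      rw [one_div] at this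
      calc β * m i < β * (β⁻¹ * Real.log C) := by
            exact mul_lt_mul_of_pos_left this hβ
        _ = Real.log C := by field_simp
    calc C⁻¹ = Real.exp (-Real.log C) := by rw [Real.exp_neg, Real.exp_log hCpos]
      _ < Real.exp (-β * m i) := by
          apply Real.exp_lt_exp.mpr; linarith
  have hsub : insert 1 (T.image (sw k)) ⊆ pairPerms k := by
    intro π hπ
    rcases Finset.mem_insert.mp hπ with h1 | h2
    · subst h1; exact one_mem_pairPerms k
    · obtain ⟨i, _, rfl⟩ := Finset.mem_image.mp h2
      exact sw_mem k i
  have hnotmem : (1 : Equiv.Perm (Fin (2 * k))) ∉ T.image (sw k) := by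
    intro hc
    obtain ⟨i, _, hi⟩ := Finset.mem_image.mp hc
    exact sw_ne_one k i hi
  have hTne : T.Nonempty := by
    refine Finset.card_pos.mp ?_
    have h0 : (0:ℝ) < (T.card : ℝ) := lt_of_lt_of_le (by linarith) hfew
    exact_mod_cast h0
  have hS : 1 + (T.card : ℝ) * C⁻¹ < ∑ π' ∈ pairPerms k, f π' := by
    have h1 : ∑ π' ∈ insert 1 (T.image (sw k)), f π' ≤ ∑ π' ∈ pairPerms k, f π' :=
      Finset.sum_le_sum_of_subset_of_nonneg hsub (fun _ _ _ => Real.exp_nonneg _)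
    have h2 : ∑ π' ∈ insert 1 (T.image (sw k)), f π'
        = 1 + ∑ i ∈ T, Real.exp (-β * m i) := by
      rw [Finset.sum_insert hnotmem,
        Finset.sum_image (fun i _ j _ hij => sw_injective k hij)]
      simp [hf, disagree_one_one, disagree_one_sw]
    have h3 : (T.card : ℝ) * C⁻¹ < ∑ i ∈ T, Real.exp (-β * m i) := by
      calc (T.card : ℝ) * C⁻¹ = ∑ _i ∈ T, C⁻¹ := by
            rw [Finset.sum_const, nsmul_eq_mul]
        _ < _ := Finset.sum_lt_sum_of_nonempty hTne hterm
    linarith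
  -- arithmetic conclusion
  have hcard : (k : ℝ) / 2 ≤ (T.card : ℝ) := by
    rw [hT]
    push_cast at hfew ⊢
    linarith
  have h5 : (1 - ε) * C⁻¹ = 2 * ε / k := by
    rw [hC]
    field_simp
    ring
  have hfin : (1:ℝ) < 1 := by
    calc (1:ℝ) = (1 - ε) * (1 + ((k:ℝ) / 2) * C⁻¹) := by
          have : (1 - ε) * (1 + ((k:ℝ) / 2) * C⁻¹)
              = (1 - ε) + ((k:ℝ) / 2) * ((1 - ε) * C⁻¹) := by ring
          rw [this, h5]
          field_simp
          ring
      _ ≤ (1 - ε) * (1 + (T.card : ℝ) * C⁻¹) := by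
          apply mul_le_mul_of_nonneg_left _ hεpos.le
          have : (0:ℝ) ≤ C⁻¹ := by positivity
          nlinarith
      _ < (1 - ε) * ∑ π' ∈ pairPerms k, f π' := mul_lt_mul_of_pos_left hS hεpos
      _ ≤ 1 := hmain
  exact absurd hfin (lt_irrefl 1)
end
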